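/- Let A be an associative unital F-algebra containing orthogonal idempotents ι₀, ι₁ with ι₀ + ι₁ = 1, and elements ρ₀, ρ₁, ρ₂, ρ₃ indexed by ℤ/4 such that ρ_k = ι_{⟨k+1⟩}·ρ_k·ι_{⟨k⟩} where ⟨k⟩ denotes k mod 2, and such that ρ_k·ρ_l = 0 whenever l is not congruent to k − 1 modulo 4. Then the element U = Σ_{k ∈ ℤ/4} ρ_{k+3}·ρ_{k+2}·ρ_{k+1}·ρ_k commutes with each ρ_j and with each ι_j. In particular, if A is generated as an algebra by ι₀, ι₁, ρ₀, ρ₁, ρ₂, ρ₃, then U is central in A. -/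

import Mathlib

/-- Let `A` be an associative unital `F`-algebra containing orthogonal
idempotents `ι₀, ι₁` with `ι₀ + ι₁ = 1`, and elements `ρ₀, ρ₁, ρ₂, ρ₃`
indexed by `ℤ/4` with `ρ_k = ι_{⟨k+1⟩}·ρ_k·ι_{⟨k⟩}` (where `⟨k⟩` is `k mod 2`)
and `ρ_k·ρ_l = 0` unless `l ≡ k − 1 (mod 4)`. Then the element
`U = Σ_k ρ_{k+3}·ρ_{k+2}·ρ_{k+1}·ρ_k` commutes with each `ρ_j` and each `ι_j`;
in particular `U` commutes with every element of the subalgebra generated by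
the `ι`'s and `ρ`'s. -/
theorem stmt_14 (F : Type*) [Field F] (A : Type*) [Ring A] [Algebra F A]
    (ι : ZMod 2 → A) (ρ : ZMod 4 → A)
    (hidem : ∀ a b : ZMod 2, ι a * ι b = if a = b then ι a else 0)
    (hone : ι 0 + ι 1 = 1)
    (hρ : ∀ k : ZMod 4, ρ k = ι ((k.val + 1 : ℕ) : ZMod 2) * ρ k * ι ((k.val : ℕ) : ZMod 2))
    (hzero : ∀ k l : ZMod 4, l ≠ k - 1 → ρ k * ρ l = 0) :
    let U : A := ∑ k : ZMod 4, ρ (k + 3) * ρ (k + 2) * ρ (k + 1) * ρ k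
    (∀ j : ZMod 4, U * ρ j = ρ j * U) ∧
    (∀ j : ZMod 2, U * ι j = ι j * U) ∧
    (∀ x ∈ Algebra.adjoin F (Set.range ι ∪ Set.range ρ), U * x = x * U) := by
  intro U
  have hsum : U = ρ 3 * ρ 2 * ρ 1 * ρ 0 + ρ 0 * ρ 3 * ρ 2 * ρ 1 +
      ρ 1 * ρ 0 * ρ 3 * ρ 2 + ρ 2 * ρ 1 * ρ 0 * ρ 3 := by
    show (∑ k : ZMod 4, ρ (k + 3) * ρ (k + 2) * ρ (k + 1) * ρ k) = _
    rw [show (Finset.univ : Finset (ZMod 4)) = {0, 1, 2, 3} from by decide]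
    rw [Finset.sum_insert (by decide), Finset.sum_insert (by decide),
      Finset.sum_insert (by decide), Finset.sum_singleton]
    norm_num [show ((4:ZMod 4)) = 0 from by decide, show ((5:ZMod 4)) = 1 from by decide,
      show ((6:ZMod 4)) = 2 from by decide]
    abel
  -- zero products
  have z00 := hzero 0 0 (by decide); have z01 := hzero 0 1 (by decide)
  have z02 := hzero 0 2 (by decide); have z11 := hzero 1 1 (by decide)
  have z12 := hzero 1 2 (by decide); have z13 := hzero 1 3 (by decide)
  have z20 := hzero 2 0 (by decide); have z22 := hzero 2 2 (by decide)
  have z23 := hzero 2 3 (by decide); have z30 := hzero 3 0 (by decide)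
  have z31 := hzero 3 1 (by decide); have z33 := hzero 3 3 (by decide)
  have z00' : ∀ x : A, ρ 0 * (ρ 0 * x) = 0 := fun x => by rw [← mul_assoc, z00, zero_mul]
  have z01' : ∀ x : A, ρ 0 * (ρ 1 * x) = 0 := fun x => by rw [← mul_assoc, z01, zero_mul]
  have z02' : ∀ x : A, ρ 0 * (ρ 2 * x) = 0 := fun x => by rw [← mul_assoc, z02, zero_mul]
  have z11' : ∀ x : A, ρ 1 * (ρ 1 * x) = 0 := fun x => by rw [← mul_assoc, z11, zero_mul]
  have z12' : ∀ x : A, ρ 1 * (ρ 2 * x) = 0 := fun x => by rw [← mul_assoc, z12, zero_mul]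
  have z13' : ∀ x : A, ρ 1 * (ρ 3 * x) = 0 := fun x => by rw [← mul_assoc, z13, zero_mul]
  have z20' : ∀ x : A, ρ 2 * (ρ 0 * x) = 0 := fun x => by rw [← mul_assoc, z20, zero_mul]
  have z22' : ∀ x : A, ρ 2 * (ρ 2 * x) = 0 := fun x => by rw [← mul_assoc, z22, zero_mul]
  have z23' : ∀ x : A, ρ 2 * (ρ 3 * x) = 0 := fun x => by rw [← mul_assoc, z23, zero_mul]
  have z30' : ∀ x : A, ρ 3 * (ρ 0 * x) = 0 := fun x => by rw [← mul_assoc, z30, zero_mul]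
  have z31' : ∀ x : A, ρ 3 * (ρ 1 * x) = 0 := fun x => by rw [← mul_assoc, z31, zero_mul]
  have z33' : ∀ x : A, ρ 3 * (ρ 3 * x) = 0 := fun x => by rw [← mul_assoc, z33, zero_mul]
  have hr : ∀ (k : ZMod 4) (j : ZMod 2),
      ρ k * ι j = if j = ((k.val : ℕ) : ZMod 2) then ρ k else 0 := by
    intro k j
    by_cases h : j = ((k.val : ℕ) : ZMod 2)
    · rw [if_pos h]
      conv_lhs => rw [hρ k]
      rw [mul_assoc, hidem, if_pos h.symm, ← hρ k]
    · rw [if_neg h]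
      conv_lhs => rw [hρ k]
      rw [mul_assoc, hidem, if_neg (fun hh => h hh.symm), mul_zero]
  have hl : ∀ (k : ZMod 4) (j : ZMod 2), ∀ x : A,
      ι j * (ρ k * x) = if j = ((k.val + 1 : ℕ) : ZMod 2) then ρ k * x else 0 := by
    intro k j x
    have : ι j * ρ k = if j = ((k.val + 1 : ℕ) : ZMod 2) then ρ k else 0 := by
      by_cases h : j = ((k.val + 1 : ℕ) : ZMod 2)
      · rw [if_pos h]
        conv_lhs => rw [hρ k]
        rw [← mul_assoc, ← mul_assoc, hidem, if_pos h, h, ← hρ k]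
      · rw [if_neg h]
        conv_lhs => rw [hρ k]
        rw [← mul_assoc, ← mul_assoc, hidem, if_neg h, zero_mul, zero_mul]
    rw [← mul_assoc, this]
    split_ifs <;> simp
  have r00 : ρ 0 * ι 0 = ρ 0 := by rw [hr, if_pos (by decide)]
  have r01 : ρ 0 * ι 1 = 0 := by rw [hr, if_neg (by decide)]
  have r10 : ρ 1 * ι 0 = 0 := by rw [hr, if_neg (by decide)]
  have r11 : ρ 1 * ι 1 = ρ 1 := by rw [hr, if_pos (by decide)]
  have r20 : ρ 2 * ι 0 = ρ 2 := by rw [hr, if_pos (by decide)]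
  have r21 : ρ 2 * ι 1 = 0 := by rw [hr, if_neg (by decide)]
  have r30 : ρ 3 * ι 0 = 0 := by rw [hr, if_neg (by decide)]
  have r31 : ρ 3 * ι 1 = ρ 3 := by rw [hr, if_pos (by decide)]
  have l00 : ∀ x : A, ι 0 * (ρ 0 * x) = 0 := fun x => by rw [hl, if_neg (by decide)]
  have l10 : ∀ x : A, ι 1 * (ρ 0 * x) = ρ 0 * x := fun x => by rw [hl, if_pos (by decide)]
  have l01 : ∀ x : A, ι 0 * (ρ 1 * x) = ρ 1 * x := fun x => by rw [hl, if_pos (by decide)]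
  have l11 : ∀ x : A, ι 1 * (ρ 1 * x) = 0 := fun x => by rw [hl, if_neg (by decide)]
  have l02 : ∀ x : A, ι 0 * (ρ 2 * x) = 0 := fun x => by rw [hl, if_neg (by decide)]
  have l12 : ∀ x : A, ι 1 * (ρ 2 * x) = ρ 2 * x := fun x => by rw [hl, if_pos (by decide)]
  have l03 : ∀ x : A, ι 0 * (ρ 3 * x) = ρ 3 * x := fun x => by rw [hl, if_pos (by decide)]
  have l13 : ∀ x : A, ι 1 * (ρ 3 * x) = 0 := fun x => by rw [hl, if_neg (by decide)]
  have key1 : ∀ j : ZMod 4, U * ρ j = ρ j * U := by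
    intro j
    rcases (show j = 0 ∨ j = 1 ∨ j = 2 ∨ j = 3 by revert j; decide) with rfl | rfl | rfl | rfl <;>
    · rw [hsum]
      simp only [add_mul, mul_add, mul_assoc]
      simp [z00, z01, z02, z11, z12, z13, z20, z22, z23, z30, z31, z33, z00', z01', z02', z11', z12', z13', z20', z22', z23', z30', z31', z33', mul_assoc]
  have key2 : ∀ j : ZMod 2, U * ι j = ι j * U := by
    intro j
    rcases (show j = 0 ∨ j = 1 by revert j; decide) with rfl | rfl <;>
    · rw [hsum]
      simp only [add_mul, mul_add, mul_assoc]
      simp [r00, r01, r10, r11, r20, r21, r30, r31,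
        l00, l10, l01, l11, l02, l12, l03, l13, mul_assoc]
  refine ⟨key1, key2, ?_⟩
  intro x hx
  induction hx using Algebra.adjoin_induction with
  | mem x hx =>
    rcases hx with ⟨j, rfl⟩ | ⟨j, rfl⟩
    · exact key2 j
    · exact key1 j
  | algebraMap r => exact (Algebra.commutes r U).symm
  | add x y _ _ hx hy => rw [mul_add, add_mul, hx, hy]
  | mul x y _ _ hx hy => rw [← mul_assoc, hx, mul_assoc, hy, ← mul_assoc]
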